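/- The sum ∑_{m=3}^∞ m·(F(m)-1)/2^m equals 8, where F is the Fibonacci sequence with F(0)=0, F(1)=1; hence the expected number of fair-coin tosses until the pattern HTT first appears is 8. -/

import Mathlib

open Real goldenRatio

/-- `∑_{m≥3} m·(F m - 1)/2^m = 8`: the expected number of fair-coin tosses until
the pattern HTT first appears is 8.  (The terms for `m ≤ 2` vanish.) -/
theorem expected_tosses_HTT :
    ∑' m : ℕ, ((m * (Nat.fib m - 1) : ℕ) : ℝ) / 2 ^ m = 8 := by
  have hs : (0:ℝ) < √5 := Real.sqrt_pos.2 (by norm_num)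
  have hs2 : √5 ^ 2 = 5 := Real.sq_sqrt (by norm_num)
  have hs4 : (2:ℝ) < √5 := by nlinarith [hs, hs2]
  have hs3 : √5 < 3 := by nlinarith [hs, hs2]
  have h1 : ‖φ/2‖ < 1 := by
    rw [Real.norm_eq_abs, abs_of_pos (by positivity)]
    unfold goldenRatio; linarith
  have h2 : ‖ψ/2‖ < 1 := by
    rw [Real.norm_eq_abs, abs_lt]
    unfold goldenConj; constructor <;> nlinarith
  have h3 : ‖(1:ℝ)/2‖ < 1 := by norm_num
  have H1 := hasSum_coe_mul_geometric_of_norm_lt_one h1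
  have H2 := hasSum_coe_mul_geometric_of_norm_lt_one h2
  have H3 := hasSum_coe_mul_geometric_of_norm_lt_one h3
  have H := ((H1.div_const (√5)).sub (H2.div_const (√5))).sub H3
  have hval : (φ/2) / (1 - φ/2) ^ 2 / √5 - (ψ/2) / (1 - ψ/2) ^ 2 / √5
      - (1/2 : ℝ) / (1 - 1/2) ^ 2 = 8 := by
    unfold goldenRatio goldenConj
    have e1 : (1 : ℝ) - (1 + √5)/2/2 = (3 - √5)/4 := by ring
    have e2 : (1 : ℝ) - (1 - √5)/2/2 = (3 + √5)/4 := by ring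
    rw [e1, e2]
    have p1 : (3:ℝ) - √5 ≠ 0 := by nlinarith
    have p2 : (3:ℝ) + √5 ≠ 0 := by nlinarith
    have p3 : √5 ≠ 0 := ne_of_gt hs
    field_simp
    linear_combination (552 * √5 - 40 * √5 ^ 3) * hs2
  rw [hval] at H
  have heq : ∀ m : ℕ, ((m * (Nat.fib m - 1) : ℕ) : ℝ) / 2 ^ m
      = (m : ℝ) * (φ/2) ^ m / √5 - (m : ℝ) * (ψ/2) ^ m / √5 - (m : ℝ) * (1/2 : ℝ) ^ m := by
    intro m
    rcases Nat.eq_zero_or_pos m with hm | hm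
    · subst hm; simp
    · have hfib : 1 ≤ Nat.fib m := Nat.fib_pos.2 hm
      have : ((m * (Nat.fib m - 1) : ℕ) : ℝ) = m * ((Nat.fib m : ℝ) - 1) := by
        push_cast [Nat.cast_sub hfib]; ring
      rw [this, Real.coe_fib_eq]
      simp only [div_pow, one_pow]
      have h2m : (2:ℝ) ^ m ≠ 0 := by positivity
      have p3 : √5 ≠ 0 := ne_of_gt hs
      field_simp
  rw [tsum_congr heq]
  exact (H.congr_fun (fun m => rfl)).tsum_eq
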